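/- Let h ≥ 0, d ≥ 1, λ > 0 be real numbers. If h ≤ (d / log 2) · log( 1 + h/(λ·d) ), then h ≤ (2d / log 2) · log( 1 + 1/(λ · log 2) ). -/

import Mathlib

lemma cubic_le_exp {x : ℝ} (hx : 0 ≤ x) : 1 + x + x ^ 2 / 2 + x ^ 3 / 6 ≤ Real.exp x := by
  have := Real.sum_le_exp_of_nonneg hx 4
  simp [Finset.sum_range_succ, Nat.factorial] at this
  nlinarith [this]

lemma key_ineq {t c : ℝ} (ht : 0 ≤ t) (hc : 0 < c) (H : Real.exp (2 * t) ≤ 1 + 2 * t * c) :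
    Real.exp t ≤ 1 + c := by
  by_contra hlt
  push_neg at hlt
  have h1 : (1 + c) ^ 2 < Real.exp (2 * t) := by
    rw [show (2:ℝ) * t = t + t by ring, Real.exp_add]
    nlinarith [hc.le, hlt]
  have h2 : 1 + 2 * t + (2 * t) ^ 2 / 2 + (2 * t) ^ 3 / 6 ≤ Real.exp (2 * t) :=
    cubic_le_exp (by linarith)
  -- from h1 and H : (1+c)^2 < 1 + 2tc ⇒ t > 1 + c/2
  have ht1 : 1 + c / 2 < t := by nlinarith
  nlinarith [h2, H, ht1, sq_nonneg c, sq_nonneg t]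

theorem solve_elliptical_count_ineq (h d lam : ℝ) (hh : 0 ≤ h) (hd : 1 ≤ d) (hlam : 0 < lam)
    (hyp : h ≤ (d / Real.log 2) * Real.log (1 + h / (lam * d))) :
    h ≤ (2 * d / Real.log 2) * Real.log (1 + 1 / (lam * Real.log 2)) := by
  have hL : 0 < Real.log 2 := Real.log_pos (by norm_num)
  have hd0 : 0 < d := by linarith
  set L := Real.log 2 with hLdef
  set t := h * L / (2 * d) with htdef
  set c := 1 / (lam * L) with hcdef
  have ht : 0 ≤ t := by positivity
  have hc : 0 < c := by positivity
  have harg : 0 < 1 + h / (lam * d) := by positivity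
  have h2t : 2 * t = h * L / d := by rw [htdef]; field_simp
  have h2tc : 2 * t * c = h / (lam * d) := by
    rw [h2t, hcdef]; field_simp
  have H : Real.exp (2 * t) ≤ 1 + 2 * t * c := by
    rw [h2tc]
    have hlog : 2 * t ≤ Real.log (1 + h / (lam * d)) := by
      rw [h2t, div_le_iff₀ hd0]
      have hmul := mul_le_mul_of_nonneg_right hyp hL.le
      have he : d / L * Real.log (1 + h / (lam * d)) * L = Real.log (1 + h / (lam * d)) * d := by
        field_simp
      linarith [hmul, he.le]
    calc Real.exp (2 * t) ≤ Real.exp (Real.log (1 + h / (lam * d))) := Real.exp_le_exp.2 hlog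
      _ = 1 + h / (lam * d) := Real.exp_log harg
  have hkey := key_ineq ht hc H
  have hlog2 : t ≤ Real.log (1 + c) := by
    rw [Real.le_log_iff_exp_le (by positivity)]; exact hkey
  have : h = (2 * d / L) * t := by rw [htdef]; field_simp
  rw [this]
  gcongr
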